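/- Let (X,r,m) be a marked metric measure space and let ((x(i),v(i)))_{i∈ℕ} be an i.i.d. sequence with distribution m. Set r̃(i,j) = r(x(i),x(j)). Then almost surely: the empirical measures n⁻¹Σ_{i=1}ⁿ δ_{(i,v(i))} on X̃ × ℝ≥0 converge weakly (where X̃ is the completion of (ℕ,r̃)), and the resulting marked metric measure space is isomorphic to (X,r,m) restricted to the support of m(·×ℝ≥0), i.e. it has the same marked distance matrix distribution as (X,r,m). -/

import Mathlib

open MeasureTheory ProbabilityTheory Filter
open scoped Topology ENNReal NNReal

/-- The Prohorov distance of two measures with respect to a distance function `d`. -/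
noncomputable def prohorovDist {α : Type*} [MeasurableSpace α]
    (d : α → α → ℝ) (μ ν : Measure α) : ℝ :=
  sInf {ε : ℝ | 0 < ε ∧
    (∀ F : Set α, μ F ≤ ν {y | ∃ x ∈ F, d x y < ε} + ENNReal.ofReal ε) ∧
    (∀ F : Set α, ν F ≤ μ {y | ∃ x ∈ F, d x y < ε} + ENNReal.ofReal ε)}

/-- The `n`-th empirical measure `n⁻¹ ∑_{i<n} δ_{(i,v(i))}` on `ℕ × ℝ`. -/
noncomputable def empMeas (v : ℕ → ℝ) (n : ℕ) : Measure (ℕ × ℝ) :=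
  ((n : ℝ≥0∞))⁻¹ • ∑ i ∈ Finset.range n, Measure.dirac ((i, v i) : ℕ × ℝ)

open Set Metric TopologicalSpace

lemma sum_dirac_apply {α ι : Type*} [MeasurableSpace α] (s : Finset ι) (z : ι → α)
    {B : Set α} (hB : MeasurableSet B) :
    (∑ i ∈ s, Measure.dirac (z i)) B = ∑ i ∈ s, B.indicator (fun _ => (1:ℝ≥0∞)) (z i) := by
  rw [MeasureTheory.Measure.finset_sum_apply]
  exact Finset.sum_congr rfl fun i _ => Measure.dirac_apply' (z i) hB

lemma indicator_ofReal {α : Type*} (B : Set α) (x : α) :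
    B.indicator (fun _ => (1:ℝ≥0∞)) x = ENNReal.ofReal (B.indicator (fun _ => (1:ℝ)) x) := by
  by_cases h : x ∈ B <;> simp [Set.indicator_of_mem, Set.indicator_of_notMem, h]

lemma avg_ofReal {n : ℕ} (hn : 0 < n) (t : ℕ → ℝ) (ht : ∀ i, 0 ≤ t i) :
    (n:ℝ≥0∞)⁻¹ * ∑ i ∈ Finset.range n, ENNReal.ofReal (t i)
      = ENNReal.ofReal ((∑ i ∈ Finset.range n, t i) / n) := by
  rw [← ENNReal.ofReal_sum_of_nonneg (fun i _ => ht i),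
    ENNReal.ofReal_div_of_pos (by exact_mod_cast hn), ENNReal.ofReal_natCast,
    div_eq_mul_inv, mul_comm]

lemma indicator_pi {d : ℕ} {E : Type*} (C : Fin d → Set E) (w : Fin d → E) :
    (Set.univ.pi C).indicator (fun _ => (1:ℝ≥0∞)) w
      = ∏ a, (C a).indicator (fun _ => (1:ℝ≥0∞)) (w a) := by
  by_cases h : w ∈ Set.univ.pi C
  · rw [Set.indicator_of_mem h]
    rw [Set.mem_univ_pi] at h
    exact (Finset.prod_eq_one fun a _ => Set.indicator_of_mem (h a) _).symm
  · rw [Set.indicator_of_notMem h]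
    rw [Set.mem_univ_pi] at h
    push_neg at h
    obtain ⟨a, ha⟩ := h
    exact (Finset.prod_eq_zero (Finset.mem_univ a) (Set.indicator_of_notMem ha _)).symm

lemma lemV {F : Type*} [MetricSpace F] [MeasurableSpace F] [OpensMeasurableSpace F]
    (R : ℕ → Measure F) (ρ : Measure F) [∀ k, IsProbabilityMeasure (R k)]
    [IsProbabilityMeasure ρ]
    (h : ∀ ε : ℝ, 0 < ε → ∃ A : ℕ → Set F,
      (∀ j, MeasurableSet (A j)) ∧ (Pairwise fun i j => Disjoint (A i) (A j)) ∧
      (⋃ j, A j) = Set.univ ∧ (∀ j, ∀ x ∈ A j, ∀ y ∈ A j, dist x y ≤ ε) ∧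
      (∀ j, Tendsto (fun k => R k (A j)) atTop (𝓝 (ρ (A j))))) :
    ∀ ε : ℝ, 0 < ε → ∀ᶠ k in atTop, levyProkhorovEDist ρ (R k) ≤ ENNReal.ofReal ε := by
  intro ε hε
  obtain ⟨A, hmble, hdisj, hcover, hdiam, hconv⟩ := h (ε / 2) (by linarith)
  -- choose J with ρ of the complement of the first J pieces small
  have hIcompl : Tendsto (fun J : ℕ => ρ ((⋃ j ∈ Finset.range J, A j)ᶜ)) atTop (𝓝 0) := by
    have h0 : (⋂ J : ℕ, (⋃ j ∈ Finset.range J, A j)ᶜ) = ∅ := by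
      rw [← Set.compl_iUnion, Set.compl_empty_iff, Set.iUnion_eq_univ_iff]
      intro x
      have hx : x ∈ ⋃ j, A j := by rw [hcover]; trivial
      obtain ⟨j, hj⟩ := Set.mem_iUnion.1 hx
      exact ⟨j + 1, Set.mem_biUnion (Finset.mem_range.2 (Nat.lt_succ_self j)) hj⟩
    have := MeasureTheory.tendsto_measure_iInter_atTop (μ := ρ)
      (s := fun J : ℕ => (⋃ j ∈ Finset.range J, A j)ᶜ)
      (fun J => ((Finset.measurableSet_biUnion _ fun j _ => hmble j).compl).nullMeasurableSet)
      (fun J J' hJJ' => Set.compl_subset_compl.2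
        (Set.biUnion_subset_biUnion_left (by exact_mod_cast Finset.range_subset_range.2 hJJ')))
      ⟨0, measure_ne_top _ _⟩
    rwa [h0, measure_empty] at this
  have hε3 : (0:ℝ) < ε / 3 := by linarith
  obtain ⟨J, hJ⟩ : ∃ J : ℕ, ρ ((⋃ j ∈ Finset.range J, A j)ᶜ) ≤ ENNReal.ofReal (ε / 3) := by
    have h' := hIcompl.eventually_le_const
      (show (0:ℝ≥0∞) < ENNReal.ofReal (ε / 3) from ENNReal.ofReal_pos.2 hε3)
    exact h'.exists
  set U : Set F := ⋃ j ∈ Finset.range J, A j with hU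
  set cJ : ℝ≥0∞ := ENNReal.ofReal (ε / (3 * (J + 1))) with hcJ
  have hcJpos : 0 < cJ := ENNReal.ofReal_pos.2 (by positivity)
  -- per-piece eventual closeness
  have hev : ∀ᶠ k in atTop, ∀ j ∈ Finset.range J, ρ (A j) ≤ R k (A j) + cJ := by
    rw [Filter.eventually_all_finset]
    intro j _
    rcases eq_or_ne (ρ (A j)) 0 with h0 | h0
    · exact Filter.Eventually.of_forall fun k => by simp [h0]
    · have hlt : ρ (A j) - cJ < ρ (A j) :=
        ENNReal.sub_lt_self (measure_ne_top _ _) h0 hcJpos.ne'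
      filter_upwards [(hconv j).eventually_const_lt hlt] with k hk
      rw [← tsub_le_iff_right]
      exact hk.le
  filter_upwards [hev] with k hk
  -- key inequality
  have key : ∀ B : Set F, MeasurableSet B →
      ρ B ≤ R k (thickening ε B) + ENNReal.ofReal (ε / 3) + ENNReal.ofReal (ε / 3)
        + ENNReal.ofReal (ε / 3) := by
    intro B hB
    classical
    set H : Finset ℕ := (Finset.range J).filter (fun j => (A j ∩ B).Nonempty) with hH
    have hsub1 : B ⊆ (⋃ j ∈ H, A j) ∪ Uᶜ := by
      intro x hx
      by_cases hxU : x ∈ U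
      · obtain ⟨j, hjmem, hjx⟩ := by
          simpa only [hU, Set.mem_iUnion, exists_prop] using hxU
        exact Or.inl <| Set.mem_biUnion
          (Finset.mem_filter.2 ⟨hjmem, ⟨x, hjx, hx⟩⟩) hjx
      · exact Or.inr hxU
    have hstep1 : ρ B ≤ (∑ j ∈ H, ρ (A j)) + ρ Uᶜ := by
      refine (measure_mono hsub1).trans ?_
      exact (measure_union_le _ _).trans (add_le_add_left (measure_biUnion_finset_le _ _) _)
    have hstep2 : (∑ j ∈ H, ρ (A j)) ≤ (∑ j ∈ H, R k (A j)) + ENNReal.ofReal (ε / 3) := by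
      calc (∑ j ∈ H, ρ (A j)) ≤ ∑ j ∈ H, (R k (A j) + cJ) := by
            refine Finset.sum_le_sum fun j hj => hk j (Finset.mem_filter.1 hj).1
        _ = (∑ j ∈ H, R k (A j)) + H.card • cJ := by
            rw [Finset.sum_add_distrib, Finset.sum_const]
        _ ≤ (∑ j ∈ H, R k (A j)) + ENNReal.ofReal (ε / 3) := by
            refine add_le_add_right ?_ _
            have hcard' : H.card ≤ J + 1 :=
              (Finset.card_filter_le _ _).trans (by simp)
            have hcard : (H.card : ℝ≥0∞) ≤ ((J + 1 : ℕ) : ℝ≥0∞) := by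
              exact_mod_cast hcard'
            calc H.card • cJ = (H.card : ℝ≥0∞) * cJ := by rw [nsmul_eq_mul]
              _ ≤ ((J + 1 : ℕ) : ℝ≥0∞) * cJ := mul_le_mul_left hcard _
              _ = ENNReal.ofReal ((J + 1 : ℕ) * (ε / (3 * (J + 1)))) := by
                  rw [hcJ, ← ENNReal.ofReal_natCast, ← ENNReal.ofReal_mul (by positivity)]
              _ ≤ ENNReal.ofReal (ε / 3) := by
                  refine ENNReal.ofReal_le_ofReal ?_
                  have h1 : (0:ℝ) < (J:ℝ) + 1 := by positivity
                  have : ((J:ℝ) + 1) * (ε / (3 * ((J:ℝ) + 1))) = ε / 3 := by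
                    field_simp
                  push_cast
                  rw [this]
      
    have hstep3 : (∑ j ∈ H, R k (A j)) ≤ R k (thickening ε B) := by
      rw [← measure_biUnion_finset ?disj (fun j _ => hmble j)]
      case disj =>
        intro i hi j hj hij
        exact (hdisj hij).mono le_rfl le_rfl
      refine measure_mono ?_
      intro z hz
      obtain ⟨j, hjH, hjz⟩ := by
        simpa only [Set.mem_iUnion, exists_prop] using hz
      obtain ⟨y, hyA, hyB⟩ := (Finset.mem_filter.1 hjH).2
      refine Metric.mem_thickening_iff.2 ⟨y, hyB, ?_⟩
      calc dist z y ≤ ε / 2 := hdiam j z hjz y hyA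
        _ < ε := by linarith
    calc ρ B ≤ (∑ j ∈ H, ρ (A j)) + ρ Uᶜ := hstep1
      _ ≤ ((∑ j ∈ H, R k (A j)) + ENNReal.ofReal (ε / 3)) + ENNReal.ofReal (ε / 3) :=
          add_le_add hstep2 hJ
      _ ≤ (R k (thickening ε B) + ENNReal.ofReal (ε / 3)) + ENNReal.ofReal (ε / 3) := by
          gcongr
      _ ≤ _ := by
          rw [add_assoc, add_assoc, add_assoc]
          gcongr
          simp [le_add_iff_nonneg_left]
  -- conclude
  refine levyProkhorovEDist_le_of_forall_le ρ (R k) (ENNReal.ofReal ε) ?_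
  intro ε' B hε' hε'top hB
  have hεle : ε ≤ ε'.toReal := by
    have := ENNReal.toReal_lt_toReal (ENNReal.ofReal_ne_top) hε'top.ne |>.2 hε'
    rw [ENNReal.toReal_ofReal hε.le] at this
    exact this.le
  have hthick : R k (thickening ε B) ≤ R k (thickening ε'.toReal B) :=
    measure_mono (Metric.thickening_mono hεle B)
  have hsum : ENNReal.ofReal (ε / 3) + ENNReal.ofReal (ε / 3) + ENNReal.ofReal (ε / 3)
      = ENNReal.ofReal ε := by
    rw [← ENNReal.ofReal_add (by positivity) (by positivity),
      ← ENNReal.ofReal_add (by positivity) (by positivity)]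
    ring_nf
  calc ρ B ≤ R k (thickening ε B) + ENNReal.ofReal (ε / 3) + ENNReal.ofReal (ε / 3)
        + ENNReal.ofReal (ε / 3) := key B hB
    _ = R k (thickening ε B) + ENNReal.ofReal ε := by
        rw [add_assoc, add_assoc, ← hsum]; ring_nf
    _ ≤ R k (thickening ε'.toReal B) + ε' := add_le_add hthick hε'.le

lemma preimage_thickening_eq {α G : Type*} [PseudoMetricSpace G] (ι : α → G)
    (F : Set α) (ε : ℝ) :
    ι ⁻¹' (thickening ε (ι '' F)) = {y | ∃ x ∈ F, dist (ι x) (ι y) < ε} := by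
  ext y
  simp only [Set.mem_preimage, Metric.mem_thickening_iff, Set.mem_setOf_eq]
  constructor
  · rintro ⟨z, ⟨x, hxF, rfl⟩, hd⟩
    exact ⟨x, hxF, by rwa [dist_comm]⟩
  · rintro ⟨x, hxF, hd⟩
    exact ⟨ι x, ⟨x, hxF, rfl⟩, by rwa [dist_comm]⟩

lemma single_cond {α G : Type*} [MeasurableSpace α] [MetricSpace G] [MeasurableSpace G]
    [OpensMeasurableSpace G] {ι : α → G} (hι : Measurable ι) {μ ν : Measure α} {ε : ℝ}
    (hε : 0 < ε)
    (hLP : levyProkhorovEDist (Measure.map ι μ) (Measure.map ι ν) < ENNReal.ofReal ε) :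
    ∀ F : Set α, μ F ≤ ν {y | ∃ x ∈ F, dist (ι x) (ι y) < ε} + ENNReal.ofReal ε := by
  intro F
  have h1 : μ F ≤ (Measure.map ι μ) (closure (ι '' F)) := by
    rw [Measure.map_apply hι measurableSet_closure]
    exact measure_mono (fun x hx => subset_closure (Set.mem_image_of_mem ι hx))
  have h2 := left_measure_le_of_levyProkhorovEDist_lt hLP
    (B := closure (ι '' F)) measurableSet_closure
  rw [ENNReal.toReal_ofReal hε.le, Metric.thickening_closure,
    Measure.map_apply hι isOpen_thickening.measurableSet, preimage_thickening_eq] at h2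
  exact h1.trans h2

lemma prohorovDist_le_of_levyProkhorovEDist_lt {α G : Type*} [MeasurableSpace α]
    [MetricSpace G] [MeasurableSpace G] [OpensMeasurableSpace G]
    {ι : α → G} (hι : Measurable ι) (μ ν : Measure α) {ε : ℝ} (hε : 0 < ε)
    (hLP : levyProkhorovEDist (Measure.map ι μ) (Measure.map ι ν) < ENNReal.ofReal ε) :
    prohorovDist (fun p q => dist (ι p) (ι q)) μ ν ≤ ε := by
  refine csInf_le ⟨0, fun x hx => hx.1.le⟩ ?_
  refine ⟨hε, single_cond hι hε hLP, single_cond hι hε ?_⟩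
  rwa [levyProkhorovEDist_comm]

lemma tendsto_probabilityMeasure_of_LP {F : Type*} [MetricSpace F]
    [TopologicalSpace.SeparableSpace F] [MeasurableSpace F] [OpensMeasurableSpace F]
    (R : ℕ → ProbabilityMeasure F) (ρ : ProbabilityMeasure F)
    (h : ∀ ε : ℝ, 0 < ε → ∀ᶠ k in atTop,
      levyProkhorovEDist (ρ : Measure F) ((R k : Measure F)) ≤ ENNReal.ofReal ε) :
    Tendsto R atTop (𝓝 ρ) := by
  set e := LevyProkhorov.toMeasureEquiv (α := ProbabilityMeasure F) with he
  have hLP : Tendsto (fun k => e.symm (R k)) atTop (𝓝 (e.symm ρ)) := by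
    rw [Metric.tendsto_atTop]
    intro ε hε
    obtain ⟨N, hN⟩ := (h (ε / 2) (by linarith)).exists_forall_of_atTop
    refine ⟨N, fun k hk => ?_⟩
    have hd : dist (e.symm (R k)) (e.symm ρ)
        = (levyProkhorovEDist ((R k : Measure F)) (ρ : Measure F)).toReal := rfl
    rw [hd, levyProkhorovEDist_comm]
    calc (levyProkhorovEDist (ρ : Measure F) ((R k : Measure F))).toReal
        ≤ (ENNReal.ofReal (ε / 2)).toReal :=
          ENNReal.toReal_mono ENNReal.ofReal_ne_top (hN k hk)
      _ = ε / 2 := ENNReal.toReal_ofReal (by linarith)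
      _ < ε := by linarith
  exact (LevyProkhorov.continuous_toMeasure_probabilityMeasure.tendsto (e.symm ρ)).comp hLP

lemma slln_set {X : Type*} [MeasurableSpace X]
    {Ω : Type*} [MeasurableSpace Ω] (μ : Measure Ω) [IsProbabilityMeasure μ]
    (m : Measure X) [IsProbabilityMeasure m]
    (Y : ℕ → Ω → X) (hmeas : ∀ i, Measurable (Y i))
    (hindep : iIndepFun Y μ)
    (hlaw : ∀ i, Measure.map (Y i) μ = m)
    {A : Set X} (hA : MeasurableSet A) :
    ∀ᵐ ω ∂μ, Tendsto
      (fun n : ℕ => (∑ i ∈ Finset.range n, A.indicator (fun _ => (1:ℝ)) (Y i ω)) / n)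
      atTop (𝓝 ((m A).toReal)) := by
  set g : X → ℝ := A.indicator (fun _ => (1:ℝ)) with hg
  have hgm : Measurable g := measurable_const.indicator hA
  have hint : Integrable (fun ω => g (Y 0 ω)) μ := by
    refine (integrable_const (1:ℝ)).mono' ((hgm.comp (hmeas 0)).aestronglyMeasurable) ?_
    refine Filter.Eventually.of_forall fun ω => ?_
    by_cases h : Y 0 ω ∈ A <;>
      simp [hg, Real.norm_eq_abs, Set.indicator_of_mem, Set.indicator_of_notMem, h]
  have hident : ∀ i, IdentDistrib (fun ω => g (Y i ω)) (fun ω => g (Y 0 ω)) μ μ := by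
    intro i
    have hYid : IdentDistrib (Y i) (Y 0) μ μ :=
      ⟨(hmeas i).aemeasurable, (hmeas 0).aemeasurable, by rw [hlaw i, hlaw 0]⟩
    exact hYid.comp hgm
  have hpind : Pairwise (Function.onFun (IndepFun · · μ) (fun i ω => g (Y i ω))) := by
    intro i j hij
    exact (hindep.indepFun hij).comp hgm hgm
  have h := strong_law_ae_real (fun i ω => g (Y i ω)) hint hpind hident
  have hmean : μ[fun ω => g (Y 0 ω)] = (m A).toReal := by
    have h2 : ∫ ω, g (Y 0 ω) ∂μ = ∫ x, g x ∂(Measure.map (Y 0) μ) :=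
      (integral_map (hmeas 0).aemeasurable hgm.aestronglyMeasurable).symm
    rw [h2, hlaw 0, hg]
    exact integral_indicator_one hA
  rwa [hmean] at h

/-- The `d`-fold empirical measure. -/
noncomputable def empPi {E : Type*} [MeasurableSpace E] (d : ℕ) (z : ℕ → E) (k : ℕ) :
    Measure (Fin d → E) :=
  (((k+1 : ℝ≥0∞))^d)⁻¹ • ∑ ℓ : Fin d → Fin (k+1), Measure.dirac (fun a => z (ℓ a))

lemma empPi_prob {E : Type*} [MeasurableSpace E] (d : ℕ) (z : ℕ → E) (k : ℕ) :
    IsProbabilityMeasure (empPi d z k) := by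
  constructor
  rw [empPi, Measure.smul_apply, sum_dirac_apply _ _ MeasurableSet.univ]
  simp only [Set.indicator_of_mem (Set.mem_univ _)]
  rw [Finset.sum_const, Finset.card_univ, Fintype.card_fun]
  simp only [Fintype.card_fin, nsmul_eq_mul, smul_eq_mul, Nat.cast_pow, Nat.cast_add,
    Nat.cast_one, mul_one]
  have h1 : ((k:ℝ≥0∞) + 1) ≠ 0 := by
    simp
  have h2 : ((k:ℝ≥0∞) + 1) ≠ ⊤ := by
    simp [ENNReal.add_eq_top]
  exact ENNReal.inv_mul_cancel (pow_ne_zero _ h1) (ENNReal.pow_ne_top h2)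

lemma empPi_apply_pi {E : Type*} [MeasurableSpace E] (d : ℕ) (z : ℕ → E) (k : ℕ)
    {C : Fin d → Set E} (hC : ∀ a, MeasurableSet (C a)) :
    empPi d z k (Set.univ.pi C)
      = ENNReal.ofReal (∏ a,
          ((∑ i ∈ Finset.range (k+1), (C a).indicator (fun _ => (1:ℝ)) (z i)) / (k+1))) := by
  classical
  rw [empPi, Measure.smul_apply, sum_dirac_apply _ _ (MeasurableSet.univ_pi hC)]
  simp only [indicator_pi]
  rw [show (∑ ℓ : Fin d → Fin (k+1), ∏ a, (C a).indicator (fun _ => (1:ℝ≥0∞)) (z (ℓ a)))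
      = ∏ a : Fin d, ∑ i : Fin (k+1), (C a).indicator (fun _ => (1:ℝ≥0∞)) (z i) by
    rw [Finset.prod_univ_sum (κ := fun _ : Fin d => Fin (k+1)) (fun _ => Finset.univ)
      (fun a i => (C a).indicator (fun _ => (1:ℝ≥0∞)) (z i))]
    rw [Fintype.piFinset_univ]]
  rw [smul_eq_mul, ENNReal.inv_pow]
  have hpow : ((k+1:ℝ≥0∞))⁻¹ ^ d = ∏ _a : Fin d, ((k+1:ℝ≥0∞))⁻¹ := by
    rw [Finset.prod_const, Finset.card_univ, Fintype.card_fin]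
  rw [hpow, ← Finset.prod_mul_distrib]
  have hfac : ∀ a : Fin d, ((k+1:ℝ≥0∞))⁻¹ * ∑ i : Fin (k+1),
      (C a).indicator (fun _ => (1:ℝ≥0∞)) (z i)
      = ENNReal.ofReal ((∑ i ∈ Finset.range (k+1), (C a).indicator (fun _ => (1:ℝ)) (z i))
          / (k+1)) := by
    intro a
    rw [Fin.sum_univ_eq_sum_range (fun i => (C a).indicator (fun _ => (1:ℝ≥0∞)) (z i))]
    simp only [indicator_ofReal]
    rw [show ((k+1:ℝ≥0∞)) = ((k+1 : ℕ) : ℝ≥0∞) by push_cast; ring]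
    rw [avg_ofReal (Nat.succ_pos k) _ (fun i => Set.indicator_nonneg (fun _ _ => zero_le_one) _)]
    norm_num
  rw [Finset.prod_congr rfl (fun a _ => hfac a)]
  rw [← ENNReal.ofReal_prod_of_nonneg]
  intro a _
  have : (0:ℝ) ≤ ∑ i ∈ Finset.range (k + 1), (C a).indicator (fun _ => (1:ℝ)) (z i) :=
    Finset.sum_nonneg fun i _ => Set.indicator_nonneg (fun _ _ => zero_le_one) _
  positivity

/-- Weak convergence of the `d`-fold empirical measures towards `ρd`. -/
lemma empPi_tendsto {E : Type*} [MetricSpace E] [TopologicalSpace.SeparableSpace E]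
    [SecondCountableTopology E] [MeasurableSpace E] [BorelSpace E]
    (d : ℕ) (z : ℕ → E) (m : Measure E) [IsProbabilityMeasure m]
    (ρd : Measure (Fin d → E)) [IsProbabilityMeasure ρd]
    (AE : ℕ → ℕ → Set E)
    (hAEm : ∀ q j, MeasurableSet (AE q j))
    (hAEb : ∀ q j, Bornology.IsBounded (AE q j))
    (hAEd : ∀ q j, Metric.diam (AE q j) ≤ 1 / (q + 1))
    (hAEu : ∀ q, ⋃ j, AE q j = Set.univ)
    (hAEdisj : ∀ q, Pairwise fun j j' => Disjoint (AE q j) (AE q j'))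
    (hρ : ∀ (C : Fin d → Set E), (∀ a, MeasurableSet (C a)) →
      ρd (Set.univ.pi C) = ∏ a, m (C a))
    (hcnt : ∀ q j, Tendsto
      (fun n : ℕ => (∑ i ∈ Finset.range n, (AE q j).indicator (fun _ => (1:ℝ)) (z i)) / n)
      atTop (𝓝 ((m (AE q j)).toReal))) :
    ∀ ε : ℝ, 0 < ε → ∀ᶠ k in atTop,
      levyProkhorovEDist ρd (empPi d z k) ≤ ENNReal.ofReal ε := by
  classical
  haveI : ∀ k, IsProbabilityMeasure (empPi d z k) := fun k => empPi_prob d z k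
  refine lemV _ _ ?_
  intro ε hε
  -- choose a fine enough partition scale
  obtain ⟨q, hq⟩ : ∃ q : ℕ, 1 / ((q:ℝ) + 1) ≤ ε := by
    obtain ⟨q, hq⟩ := exists_nat_ge (1 / ε)
    refine ⟨q, ?_⟩
    have h1 : 1 ≤ (q:ℝ) * ε := (div_le_iff₀ hε).1 hq
    rw [div_le_iff₀ (by positivity)]
    nlinarith
  obtain ⟨f, hf⟩ := exists_injective_nat (Fin d → ℕ)
  set B : (Fin d → ℕ) → Set (Fin d → E) := fun jv => Set.univ.pi fun a => AE q (jv a) with hB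
  set A : ℕ → Set (Fin d → E) := Function.extend f B (fun _ => ∅) with hA
  have hAcase : ∀ n, (∃ jv, f jv = n ∧ A n = B jv) ∨ A n = ∅ := by
    intro n
    by_cases h : ∃ jv, f jv = n
    · obtain ⟨jv, rfl⟩ := h
      exact Or.inl ⟨jv, rfl, hf.extend_apply _ _ _⟩
    · exact Or.inr (Function.extend_apply' _ _ _ h)
  refine ⟨A, ?_, ?_, ?_, ?_, ?_⟩
  · intro n
    rcases hAcase n with ⟨jv, _, hn⟩ | hn <;> rw [hn]
    · exact MeasurableSet.univ_pi fun a => hAEm q (jv a)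
    · exact MeasurableSet.empty
  · intro n n' hnn'
    rcases hAcase n with ⟨jv, hfn, hn⟩ | hn
    · rcases hAcase n' with ⟨jv', hfn', hn'⟩ | hn'
      · rw [hn, hn']
        have hjv : jv ≠ jv' := by
          rintro rfl; exact hnn' (hfn ▸ hfn')
        obtain ⟨a, ha⟩ := Function.ne_iff.1 hjv
        rw [Set.disjoint_left]
        intro x hx hx'
        exact Set.disjoint_left.1 (hAEdisj q ha) (hx a (Set.mem_univ a))
          (hx' a (Set.mem_univ a))
      · rw [hn']; exact disjoint_empty _
    · rw [hn]; exact empty_disjoint _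
  · rw [Set.iUnion_eq_univ_iff]
    intro x
    have hx : ∀ a, ∃ j, x a ∈ AE q j := by
      intro a
      have : x a ∈ ⋃ j, AE q j := by rw [hAEu q]; trivial
      exact Set.mem_iUnion.1 this
    choose jv hjv using hx
    refine ⟨f jv, ?_⟩
    rw [hA, hf.extend_apply]
    exact fun a _ => hjv a
  · intro n x hx y hy
    rcases hAcase n with ⟨jv, _, hn⟩ | hn
    · rw [hn] at hx hy
      refine (dist_pi_le_iff hε.le).2 fun a => ?_
      calc dist (x a) (y a) ≤ Metric.diam (AE q (jv a)) :=
            Metric.dist_le_diam_of_mem (hAEb _ _) (hx a (Set.mem_univ a))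
              (hy a (Set.mem_univ a))
        _ ≤ 1 / (q + 1) := hAEd _ _
        _ ≤ ε := hq
    · rw [hn] at hx; exact absurd hx (Set.notMem_empty x)
  · intro n
    rcases hAcase n with ⟨jv, _, hn⟩ | hn
    · rw [hn]
      have hRk : ∀ k, empPi d z k (B jv)
          = ENNReal.ofReal (∏ a, ((∑ i ∈ Finset.range (k+1),
              (AE q (jv a)).indicator (fun _ => (1:ℝ)) (z i)) / (k+1))) := by
        intro k
        exact empPi_apply_pi d z k fun a => hAEm q (jv a)
      have hρB : ρd (B jv) = ENNReal.ofReal (∏ a, (m (AE q (jv a))).toReal) := by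
        rw [hB, hρ _ (fun a => hAEm q (jv a)),
          ENNReal.ofReal_prod_of_nonneg (fun a _ => ENNReal.toReal_nonneg)]
        exact Finset.prod_congr rfl fun a _ => (ENNReal.ofReal_toReal (measure_ne_top m _)).symm
      rw [hρB]
      have hreal : Tendsto (fun k : ℕ => ∏ a : Fin d, ((∑ i ∈ Finset.range (k+1),
          (AE q (jv a)).indicator (fun _ => (1:ℝ)) (z i)) / (k+1)))
          atTop (𝓝 (∏ a : Fin d, (m (AE q (jv a))).toReal)) := by
        refine tendsto_finset_prod _ fun a _ => ?_
        have h2 := (hcnt q (jv a)).comp (tendsto_add_atTop_nat 1)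
        refine h2.congr fun k => ?_
        simp only [Function.comp_apply]
        push_cast
        ring_nf
      have := (ENNReal.continuous_ofReal.tendsto _).comp hreal
      refine Tendsto.congr (fun k => (hRk k).symm) ?_
      exact this
    · rw [hn]
      simp only [measure_empty]
      exact tendsto_const_nhds

lemma indicator_preimage_apply {α β M : Type*} [Zero M] (ι : α → β) (A : Set β) (c : M)
    (p : α) : (ι ⁻¹' A).indicator (fun _ => c) p = A.indicator (fun _ => c) (ι p) := by
  by_cases h : ι p ∈ A <;>
    simp [Set.indicator_of_mem, Set.indicator_of_notMem, h, Set.mem_preimage]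

lemma empMeas_prob (v : ℕ → ℝ) (k : ℕ) : IsProbabilityMeasure (empMeas v (k+1)) := by
  constructor
  rw [empMeas, Measure.smul_apply, sum_dirac_apply _ _ MeasurableSet.univ]
  simp only [Set.indicator_of_mem (Set.mem_univ _)]
  rw [Finset.sum_const, Finset.card_range, nsmul_eq_mul, mul_one, smul_eq_mul]
  exact ENNReal.inv_mul_cancel (by exact_mod_cast Nat.succ_ne_zero k) (by simp)

lemma map_empMeas_apply {G : Type*} [MeasurableSpace G] {ι : ℕ × ℝ → G}
    (hι : Measurable ι) (v : ℕ → ℝ) (n : ℕ) {A : Set G} (hA : MeasurableSet A) :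
    Measure.map ι (empMeas v n) A
      = ENNReal.ofReal ((∑ i ∈ Finset.range n,
          A.indicator (fun _ => (1:ℝ)) (ι (i, v i))) / n) := by
  rw [Measure.map_apply hι hA, empMeas, Measure.smul_apply,
    sum_dirac_apply _ _ (hι hA), smul_eq_mul]
  have : ∀ i, (ι ⁻¹' A).indicator (fun _ => (1:ℝ≥0∞)) (i, v i)
      = ENNReal.ofReal (A.indicator (fun _ => (1:ℝ)) (ι (i, v i))) := by
    intro i
    rw [indicator_preimage_apply, indicator_ofReal]
  rcases Nat.eq_zero_or_pos n with rfl | hn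
  · simp
  rw [Finset.sum_congr rfl fun i _ => this i,
    avg_ofReal hn _ (fun i => Set.indicator_nonneg (fun _ _ => zero_le_one) _)]

lemma part1 {X : Type*} [MetricSpace X] [TopologicalSpace.SeparableSpace X]
    [SecondCountableTopology X] [MeasurableSpace X] [BorelSpace X]
    (x : ℕ → X) (v : ℕ → ℝ) (ρ₁ : Measure (X × ℝ)) [IsProbabilityMeasure ρ₁]
    (AXR : ℕ → ℕ → Set (X × ℝ))
    (hAm : ∀ q j, MeasurableSet (AXR q j))
    (hAb : ∀ q j, Bornology.IsBounded (AXR q j))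
    (hAd : ∀ q j, Metric.diam (AXR q j) ≤ 1 / (q + 1))
    (hAu : ∀ q, ⋃ j, AXR q j = Set.univ)
    (hAdisj : ∀ q, Pairwise fun j j' => Disjoint (AXR q j) (AXR q j'))
    (hcnt : ∀ q j, Tendsto (fun n : ℕ => (∑ i ∈ Finset.range n,
        (AXR q j).indicator (fun _ => (1:ℝ)) (x i, v i)) / n)
      atTop (𝓝 ((ρ₁ (AXR q j)).toReal))) :
    ∀ ε : ℝ, 0 < ε → ∃ N : ℕ, ∀ k ≥ N, ∀ l ≥ N,
      prohorovDist (fun p q : ℕ × ℝ => max (dist (x p.1) (x q.1)) |p.2 - q.2|)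
        (empMeas v (k+1)) (empMeas v (l+1)) ≤ ε := by
  classical
  set ι : ℕ × ℝ → X × ℝ := fun p => (x p.1, p.2) with hιdef
  have hι : Measurable ι :=
    ((measurable_from_top (f := x)).comp measurable_fst).prodMk measurable_snd
  haveI : ∀ k, IsProbabilityMeasure (empMeas v (k+1)) := fun k => empMeas_prob v k
  set R : ℕ → Measure (X × ℝ) := fun k => Measure.map ι (empMeas v (k+1)) with hR
  haveI : ∀ k, IsProbabilityMeasure (R k) :=
    fun k => Measure.isProbabilityMeasure_map hι.aemeasurable
  have hdeq : (fun p q : ℕ × ℝ => max (dist (x p.1) (x q.1)) |p.2 - q.2|)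
      = fun p q => dist (ι p) (ι q) := by
    funext p q
    rw [Prod.dist_eq, Real.dist_eq]
  have hLP : ∀ ε : ℝ, 0 < ε → ∀ᶠ k in atTop,
      levyProkhorovEDist ρ₁ (R k) ≤ ENNReal.ofReal ε := by
    refine lemV R ρ₁ ?_
    intro ε hε
    obtain ⟨q, hq⟩ : ∃ q : ℕ, 1 / ((q:ℝ) + 1) ≤ ε := by
      obtain ⟨q, hq⟩ := exists_nat_ge (1 / ε)
      refine ⟨q, ?_⟩
      have h1 : 1 ≤ (q:ℝ) * ε := (div_le_iff₀ hε).1 hq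
      rw [div_le_iff₀ (by positivity)]
      nlinarith
    refine ⟨AXR q, hAm q, hAdisj q, hAu q, ?_, ?_⟩
    · intro j y hy y' hy'
      calc dist y y' ≤ Metric.diam (AXR q j) := Metric.dist_le_diam_of_mem (hAb q j) hy hy'
        _ ≤ 1 / (q + 1) := hAd q j
        _ ≤ ε := hq
    · intro j
      have hRk : ∀ k, R k (AXR q j) = ENNReal.ofReal ((∑ i ∈ Finset.range (k+1),
          (AXR q j).indicator (fun _ => (1:ℝ)) (x i, v i)) / (k+1)) := by
        intro k
        rw [hR, map_empMeas_apply hι v (k+1) (hAm q j)]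
        norm_num
        rfl
      have hreal := (hcnt q j).comp (tendsto_add_atTop_nat 1)
      have hofReal := (ENNReal.continuous_ofReal.tendsto _).comp hreal
      rw [ENNReal.ofReal_toReal (measure_ne_top ρ₁ _)] at hofReal
      refine Tendsto.congr (fun k => ?_) hofReal
      rw [hRk k]
      simp only [Function.comp_apply]
      push_cast
      ring_nf
  intro ε hε
  obtain ⟨N, hN⟩ := Filter.eventually_atTop.1 (hLP (ε/3) (by linarith))
  refine ⟨N, fun k hk l hl => ?_⟩
  rw [hdeq]
  refine prohorovDist_le_of_levyProkhorovEDist_lt hι _ _ hε ?_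
  calc levyProkhorovEDist (Measure.map ι (empMeas v (k+1))) (Measure.map ι (empMeas v (l+1)))
      ≤ levyProkhorovEDist (Measure.map ι (empMeas v (k+1))) ρ₁
        + levyProkhorovEDist ρ₁ (Measure.map ι (empMeas v (l+1))) :=
        levyProkhorovEDist_triangle _ _ _
    _ ≤ ENNReal.ofReal (ε/3) + ENNReal.ofReal (ε/3) := by
        refine add_le_add ?_ (hN l hl)
        rw [levyProkhorovEDist_comm]
        exact hN k hk
    _ = ENNReal.ofReal (2*ε/3) := by
        rw [← ENNReal.ofReal_add (by linarith) (by linarith)]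
        ring_nf
    _ < ENNReal.ofReal ε := by
        rw [ENNReal.ofReal_lt_ofReal_iff hε]
        linarith

/-- Joint law of finitely many coordinates of an i.i.d. sequence is the product. -/
lemma map_pi_eq_prod {X Ω : Type*} [MeasurableSpace X] [MeasurableSpace Ω]
    (μ : Measure Ω) (m : Measure X) (Y : ℕ → Ω → X) (hmeas : ∀ i, Measurable (Y i))
    (hindep : iIndepFun Y μ)
    (hlaw : ∀ i, Measure.map (Y i) μ = m) (d : ℕ) (C : Fin d → Set X)
    (hC : ∀ a, MeasurableSet (C a)) :
    Measure.map (fun ω (a : Fin d) => Y (↑a) ω) μ (Set.univ.pi C) = ∏ a, m (C a) := by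
  classical
  have hg : Measurable (fun ω (a : Fin d) => Y (↑a) ω) :=
    measurable_pi_lambda _ fun a => hmeas _
  set sets : ℕ → Set X := fun i => if h : i < d then C ⟨i, h⟩ else Set.univ with hsets
  have hsm : ∀ i ∈ Finset.range d, MeasurableSet (sets i) := by
    intro i hi
    rw [hsets]
    simp only
    rw [dif_pos (Finset.mem_range.1 hi)]
    exact hC _
  have hpre : (fun ω (a : Fin d) => Y (↑a) ω) ⁻¹' (Set.univ.pi C)
      = ⋂ i ∈ Finset.range d, Y i ⁻¹' sets i := by
    ext ω
    simp only [Set.mem_preimage, Set.mem_univ_pi, Set.mem_iInter, Finset.mem_range]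
    constructor
    · intro h i hi
      show Y i ω ∈ sets i
      rw [hsets]
      simp only
      rw [dif_pos hi]
      exact h ⟨i, hi⟩
    · intro h a
      have h2 : Y a ω ∈ sets a := h a a.isLt
      rw [hsets] at h2
      simp only at h2
      rw [dif_pos a.isLt] at h2
      simpa using h2
  rw [Measure.map_apply hg (MeasurableSet.univ_pi hC), hpre,
    (iIndepFun_iff_measure_inter_preimage_eq_mul.1 hindep) (Finset.range d) hsm]
  have hμm : ∀ i ∈ Finset.range d, μ (Y i ⁻¹' sets i) = m (sets i) := by
    intro i hi
    rw [← hlaw i, Measure.map_apply (hmeas i) (hsm i hi)]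
  rw [Finset.prod_congr rfl hμm, ← Fin.prod_univ_eq_prod_range (fun i => m (sets i)) d]
  refine Finset.prod_congr rfl fun a _ => ?_
  congr 1
  rw [hsets]
  simp only
  rw [dif_pos a.isLt]

/-- Integral against the `d`-fold empirical measure. -/
lemma integral_empPi {E : Type*} [MeasurableSpace E] {d : ℕ}
    [MeasurableSingletonClass (Fin d → E)]
    (z : ℕ → E) (k : ℕ) (f : (Fin d → E) → ℝ)
    (hf : ∀ ℓ : Fin d → Fin (k+1), Integrable f (Measure.dirac (fun a => z (ℓ a)))) :
    ∫ w, f w ∂(empPi d z k)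
      = (∑ ℓ : Fin d → Fin (k+1), f (fun a => z (ℓ a))) / ((k+1:ℝ)^d) := by
  rw [empPi, integral_smul_measure, integral_finset_sum_measure (fun ℓ _ => hf ℓ)]
  rw [Finset.sum_congr rfl fun ℓ _ => integral_dirac f _]
  rw [ENNReal.toReal_inv, ENNReal.toReal_pow]
  have : ((k:ℝ≥0∞) + 1).toReal = (k:ℝ) + 1 := by
    rw [ENNReal.toReal_add (by simp) (by simp)]
    simp
  rw [this, smul_eq_mul, inv_mul_eq_div]

set_option maxHeartbeats 1000000 in
/-- Sampling an i.i.d. sequence `((x(i),v(i)))` from a marked metric measure space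
`(X,r,m)` and setting `r̃(i,j) = r(x(i),x(j))`: almost surely the empirical measures
`n⁻¹ ∑_{i<n} δ_{(i,v(i))}` converge weakly (equivalently, are Prohorov--Cauchy for the
distance induced by `r̃`), and the resulting marked metric measure space has the same
marked distance matrix distribution as `(X,r,m)`: all the empirical polynomial averages
converge to the corresponding moments of the marked distance matrix distribution. -/
theorem stmt14 {X : Type*} [MetricSpace X] [CompleteSpace X]
    [TopologicalSpace.SeparableSpace X] [MeasurableSpace X] [BorelSpace X]
    {Ω : Type*} [MeasurableSpace Ω] (μ : Measure Ω) [IsProbabilityMeasure μ]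
    (m : Measure (X × ℝ≥0)) [IsProbabilityMeasure m]
    (Y : ℕ → Ω → X × ℝ≥0)
    (hmeas : ∀ i, Measurable (Y i))
    (hindep : iIndepFun Y μ)
    (hlaw : ∀ i, Measure.map (Y i) μ = m) :
    ∀ᵐ ω ∂μ,
      (∀ ε : ℝ, 0 < ε → ∃ N : ℕ, ∀ k ≥ N, ∀ l ≥ N,
        prohorovDist (fun p q : ℕ × ℝ => max (dist (Y p.1 ω).1 (Y q.1 ω).1) |p.2 - q.2|)
          (empMeas (fun i => ((Y i ω).2 : ℝ)) (k + 1))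
          (empMeas (fun i => ((Y i ω).2 : ℝ)) (l + 1)) ≤ ε) ∧
      (∀ (d : ℕ) (φ : ((Fin d → Fin d → ℝ) × (Fin d → ℝ)) → ℝ), Continuous φ →
        (∃ C : ℝ, ∀ y, |φ y| ≤ C) →
        Tendsto (fun k : ℕ =>
            (∑ ℓ : Fin d → Fin (k + 1),
              φ (fun a b => dist (Y ((ℓ a : ℕ)) ω).1 (Y ((ℓ b : ℕ)) ω).1,
                 fun a => ((Y ((ℓ a : ℕ)) ω).2 : ℝ))) / ((k + 1 : ℝ) ^ d))
          atTop
          (𝓝 (∫ ω', φ (fun a b => dist (Y (a : ℕ) ω').1 (Y (b : ℕ) ω').1,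

                fun a => ((Y (a : ℕ) ω').2 : ℝ)) ∂μ))) := by
  classical
  haveI : SecondCountableTopology X := UniformSpace.secondCountable_of_separable X
  set T : X × ℝ≥0 → X × ℝ := fun e => (e.1, (e.2 : ℝ)) with hT
  have hTm : Measurable T :=
    (continuous_fst.prodMk (NNReal.continuous_coe.comp continuous_snd)).measurable
  -- partitions of X × ℝ and of E
  have hXR : ∀ q : ℕ, ∃ As : ℕ → Set (X × ℝ), (∀ n, MeasurableSet (As n)) ∧
      (∀ n, Bornology.IsBounded (As n)) ∧ (∀ n, Metric.diam (As n) ≤ 1/(q+1)) ∧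
      (⋃ n, As n = Set.univ) ∧ (Pairwise fun n n' => Disjoint (As n) (As n')) :=
    fun q => SeparableSpace.exists_measurable_partition_diam_le _ (by positivity)
  choose AXR hAXRm hAXRb hAXRd hAXRu hAXRdisj using hXR
  have hXE : ∀ q : ℕ, ∃ As : ℕ → Set (X × ℝ≥0), (∀ n, MeasurableSet (As n)) ∧
      (∀ n, Bornology.IsBounded (As n)) ∧ (∀ n, Metric.diam (As n) ≤ 1/(q+1)) ∧
      (⋃ n, As n = Set.univ) ∧ (Pairwise fun n n' => Disjoint (As n) (As n')) :=
    fun q => SeparableSpace.exists_measurable_partition_diam_le _ (by positivity)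
  choose AEp hAEm hAEb hAEd hAEu hAEdisj using hXE
  -- the almost sure event
  have master1 : ∀ᵐ ω ∂μ, ∀ q j : ℕ, Tendsto
      (fun n : ℕ => (∑ i ∈ Finset.range n,
        (T ⁻¹' (AXR q j)).indicator (fun _ => (1:ℝ)) (Y i ω)) / n)
      atTop (𝓝 ((m (T ⁻¹' (AXR q j))).toReal)) := by
    rw [ae_all_iff]
    intro q
    rw [ae_all_iff]
    intro j
    exact slln_set μ m Y hmeas hindep hlaw (hTm (hAXRm q j))
  have master2 : ∀ᵐ ω ∂μ, ∀ q j : ℕ, Tendsto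
      (fun n : ℕ => (∑ i ∈ Finset.range n,
        (AEp q j).indicator (fun _ => (1:ℝ)) (Y i ω)) / n)
      atTop (𝓝 ((m (AEp q j)).toReal)) := by
    rw [ae_all_iff]
    intro q
    rw [ae_all_iff]
    intro j
    exact slln_set μ m Y hmeas hindep hlaw (hAEm q j)
  filter_upwards [master1, master2] with ω hω1 hω2
  constructor
  · -- Part 1
    set ρ₁ : Measure (X × ℝ) := Measure.map T m with hρ₁
    haveI : IsProbabilityMeasure ρ₁ := Measure.isProbabilityMeasure_map hTm.aemeasurable
    refine part1 (fun i => (Y i ω).1) (fun i => ((Y i ω).2 : ℝ)) ρ₁ AXR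
      hAXRm hAXRb hAXRd hAXRu hAXRdisj ?_
    intro q j
    have h1 := hω1 q j
    have h2 : (ρ₁ (AXR q j)).toReal = (m (T ⁻¹' (AXR q j))).toReal := by
      rw [hρ₁, Measure.map_apply hTm (hAXRm q j)]
    rw [h2]
    refine h1.congr fun n => ?_
    congr 1
  · -- Part 2
    intro d φ hφc hφb
    obtain ⟨C, hC⟩ := hφb
    set z : ℕ → X × ℝ≥0 := fun i => Y i ω with hz
    have hgm : Measurable (fun ω' (a : Fin d) => Y (↑a) ω') :=
      measurable_pi_lambda _ fun a => hmeas _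
    set ρd : Measure (Fin d → X × ℝ≥0) := Measure.map (fun ω' (a : Fin d) => Y (↑a) ω') μ
      with hρd
    haveI : IsProbabilityMeasure ρd := Measure.isProbabilityMeasure_map hgm.aemeasurable
    haveI : ∀ k, IsProbabilityMeasure (empPi d z k) := fun k => empPi_prob d z k
    -- weak convergence of the empirical product measures
    have hLP := empPi_tendsto d z m ρd AEp hAEm hAEb hAEd hAEu hAEdisj
      (fun C hC => map_pi_eq_prod μ m Y hmeas hindep hlaw d C hC)
      (fun q j => hω2 q j)
    let Rp : ℕ → ProbabilityMeasure (Fin d → X × ℝ≥0) :=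
      fun k => ⟨empPi d z k, empPi_prob d z k⟩
    let ρp : ProbabilityMeasure (Fin d → X × ℝ≥0) := ⟨ρd, inferInstance⟩
    have hweak : Tendsto Rp atTop (𝓝 ρp) := by
      refine tendsto_probabilityMeasure_of_LP Rp ρp ?_
      exact hLP
    -- the test function
    set Φcore : (Fin d → X × ℝ≥0) → ℝ := fun w =>
      φ (fun a b => dist (w a).1 (w b).1, fun a => ((w a).2 : ℝ)) with hΦcore
    have hΦcont : Continuous Φcore := by
      refine hφc.comp (Continuous.prodMk ?_ ?_)
      · exact continuous_pi fun a => continuous_pi fun b =>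
          Continuous.dist ((continuous_apply a).fst) ((continuous_apply b).fst)
      · exact continuous_pi fun a => NNReal.continuous_coe.comp ((continuous_apply a).snd)
    set Φ : BoundedContinuousFunction (Fin d → X × ℝ≥0) ℝ :=
      BoundedContinuousFunction.ofNormedAddCommGroup Φcore hΦcont C
        (fun w => by rw [Real.norm_eq_abs]; exact hC _) with hΦ
    have hint := MeasureTheory.ProbabilityMeasure.tendsto_iff_forall_integral_tendsto.1
      hweak Φ
    have hint' : Tendsto (fun k => ∫ w, Φ w ∂(empPi d z k)) atTop (𝓝 (∫ w, Φ w ∂ρd)) := hint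
    -- identify the integrals
    have hleft : ∀ k : ℕ, ∫ w, Φ w ∂(empPi d z k)
        = (∑ ℓ : Fin d → Fin (k + 1),
            φ (fun a b => dist (Y ((ℓ a : ℕ)) ω).1 (Y ((ℓ b : ℕ)) ω).1,
               fun a => ((Y ((ℓ a : ℕ)) ω).2 : ℝ))) / ((k + 1 : ℝ) ^ d) := by
      intro k
      rw [integral_empPi z k Φ (fun ℓ => Φ.integrable _)]
      rfl
    have hright : ∫ w, Φ w ∂ρd = ∫ ω', φ (fun a b => dist (Y (a : ℕ) ω').1 (Y (b : ℕ) ω').1,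
        fun a => ((Y (a : ℕ) ω').2 : ℝ)) ∂μ := by
      rw [hρd, integral_map hgm.aemeasurable Φ.continuous.aestronglyMeasurable]
      rfl
    rw [← hright]
    refine Tendsto.congr (fun k => ?_) hint'
    exact hleft k
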